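/- Let n ≥ 4 and σ ∈ S_n with σρσ⁻¹ ∉ ⟨ρ⟩, where ρ = (1 2 … n). Then the matrix T with T_{(i,k),(j,l)} = (1/n)·[σρ^{j-1}(l) = ρ^{i-1}(k)] does not belong to Ψ_{n,n} = conv{P ⊗ Q : P, Q ∈ Ω_n}. -/

import Mathlib

open Finset Matrix

/-- The cyclic permutation `(1 2 … n)`, acting on `ZMod n` by `j ↦ j + 1`. -/
def rho (n : ℕ) : Equiv.Perm (ZMod n) := Equiv.addLeft 1

/-- `M` is an `n × n` doubly stochastic matrix. -/
def IsDS (n : ℕ) [NeZero n] (M : Matrix (ZMod n) (ZMod n) ℝ) : Prop :=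
  (∀ i j, 0 ≤ M i j) ∧ (∀ i, ∑ j, M i j = 1) ∧ (∀ j, ∑ i, M i j = 1)

/-- The permutation matrix of `p` (entry `(i,j)` is `1` iff `p j = i`). -/
def PM {R : Type*} [Zero R] [One R] (n : ℕ) (p : Equiv.Perm (ZMod n)) :
    Matrix (ZMod n) (ZMod n) R :=
  fun i j => if p j = i then 1 else 0

/-- Friedland's polytope `Φ_{n,n}`: nonnegative `n² × n²` matrices, doubly stochastic in the
double-index sense, satisfying the partial-sum constraints. -/
def Phi (n : ℕ) [NeZero n] : Set (Matrix (ZMod n × ZMod n) (ZMod n × ZMod n) ℝ) :=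
  {C | (∀ p q, 0 ≤ C p q) ∧
       (∀ p, ∑ q, C p q = 1) ∧ (∀ q, ∑ p, C p q = 1) ∧
       (∀ i k l, ∑ j, C (i, k) (j, l) = ∑ j, C (0, k) (j, l)) ∧
       (∀ i k l, ∑ j, C (j, k) (i, l) = ∑ j, C (0, k) (j, l)) ∧
       (∀ i j k, ∑ l, C (i, k) (j, l) = ∑ l, C (i, 0) (j, l)) ∧
       (∀ i j k, ∑ l, C (i, l) (j, k) = ∑ l, C (i, 0) (j, l))}

/-- The polytope `Ψ_{n,n}`: the convex hull of Kronecker products of doubly stochastic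
matrices. -/
def Psi (n : ℕ) [NeZero n] : Set (Matrix (ZMod n × ZMod n) (ZMod n × ZMod n) ℝ) :=
  convexHull ℝ {M | ∃ A B, IsDS n A ∧ IsDS n B ∧ M = Matrix.kroneckerMap (· * ·) A B}

/-- The matrix `T`, with `T_{(i,k),(j,l)} = 1/n` iff `σρ^{j-1}(l) = ρ^{i-1}(k)`. -/
noncomputable def Tmat (n : ℕ) (σ : Equiv.Perm (ZMod n)) :
    Matrix (ZMod n × ZMod n) (ZMod n × ZMod n) ℝ :=
  fun p q => if σ (q.2 + q.1) = p.2 + p.1 then (1 : ℝ) / n else 0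

lemma rho_pow (n : ℕ) (m : ℕ) (x : ZMod n) : ((rho n) ^ m) x = (m : ZMod n) + x := by
  induction m generalizing x with
  | zero => simp
  | succ k ih =>
    rw [pow_succ, Equiv.Perm.mul_apply]
    show (rho n ^ k) (1 + x) = _
    rw [ih]
    push_cast
    ring

/-- For `n ≥ 4` and `σ` with `σρσ⁻¹ ∉ ⟨ρ⟩`, the matrix `T` does not belong to `Ψ_{n,n}`. -/
theorem stmt15 (n : ℕ) [NeZero n] (hn : 4 ≤ n) (σ : Equiv.Perm (ZMod n))
    (hσ : σ * rho n * σ⁻¹ ∉ Subgroup.zpowers (rho n)) :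
    Tmat n σ ∉ Psi n := by
  intro hT
  rw [Psi, _root_.convexHull_eq] at hT
  obtain ⟨ι, t, w, z, hw0, hw1, hz, hcm⟩ := hT
  obtain ⟨s, hst, hws⟩ : ∃ s ∈ t, 0 < w s := by
    by_contra h
    push_neg at h
    have h0 : ∑ i ∈ t, w i = 0 :=
      Finset.sum_eq_zero fun i hi => le_antisymm (h i hi) (hw0 i hi)
    rw [hw1] at h0; norm_num at h0
  obtain ⟨A, B, hA, hB, hzs⟩ := hz s hst
  have hnn : ∀ i ∈ t, ∀ p q, 0 ≤ z i p q := by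
    intro i hi p q
    obtain ⟨A', B', hA', hB', h⟩ := hz i hi
    rw [h]
    exact mul_nonneg (hA'.1 _ _) (hB'.1 _ _)
  have hTeq : ∀ p q, Tmat n σ p q = ∑ i ∈ t, w i * z i p q := by
    intro p q
    rw [← hcm, Finset.centerMass_eq_of_sum_1 _ _ hw1, Matrix.sum_apply]
    simp [Matrix.smul_apply]
  have hzero : ∀ p q, Tmat n σ p q = 0 → A p.1 q.1 * B p.2 q.2 = 0 := by
    intro p q h0
    have hsum : ∑ i ∈ t, w i * z i p q = 0 := by rw [← hTeq]; exact h0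
    have := (Finset.sum_eq_zero_iff_of_nonneg
      (fun i hi => mul_nonneg (hw0 i hi) (hnn i hi p q))).mp hsum s hst
    have hz0 : z s p q = 0 := by
      rcases mul_eq_zero.mp this with h | h
      · exact absurd h (ne_of_gt hws)
      · exact h
    rw [hzs] at hz0
    exact hz0
  have hcolA : ∀ j, ∃ i, 0 < A i j := by
    intro j
    by_contra h
    push_neg at h
    have h0 : ∑ i, A i j = 0 :=
      Finset.sum_eq_zero fun i _ => le_antisymm (h i) (hA.1 i j)
    rw [hA.2.2 j] at h0; norm_num at h0
  have hcolB : ∀ l, ∃ k, 0 < B k l := by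
    intro l
    by_contra h
    push_neg at h
    have h0 : ∑ k, B k l = 0 :=
      Finset.sum_eq_zero fun k _ => le_antisymm (h k) (hB.1 k l)
    rw [hB.2.2 l] at h0; norm_num at h0
  choose I hI using hcolA
  choose K hK using hcolB
  have key : ∀ j l, σ (l + j) = K l + I j := by
    intro j l
    by_contra hne
    have hT0 : Tmat n σ (I j, K l) (j, l) = 0 := if_neg hne
    have := hzero (I j, K l) (j, l) hT0
    exact absurd this (ne_of_gt (mul_pos (hI j) (hK l)))
  have hadd : ∀ x y : ZMod n, σ (x + y) + σ 0 = σ x + σ y := by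
    intro x y
    have h1 := key y x
    have h2 := key 0 x
    have h3 := key y 0
    have h4 := key 0 0
    rw [add_zero] at h2
    rw [zero_add] at h3
    rw [add_zero] at h4
    rw [h1, h2, h3, h4]
    ring
  set c : ZMod n := σ 1 - σ 0 with hc
  have hnat : ∀ m : ℕ, σ (m : ZMod n) = c * (m : ZMod n) + σ 0 := by
    intro m
    induction m with
    | zero => simp
    | succ k ih =>
      have := hadd (k : ZMod n) 1
      have h5 : σ ((k : ZMod n) + 1) = σ (k : ZMod n) + σ 1 - σ 0 := by
        rw [← this]; ring
      push_cast
      rw [h5, ih, hc]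
      ring
  have haff : ∀ x : ZMod n, σ x = c * x + σ 0 := by
    intro x
    have := hnat x.val
    rwa [ZMod.natCast_val, ZMod.cast_id] at this
  apply hσ
  have heq : σ * rho n * σ⁻¹ = (rho n) ^ (c.val) := by
    ext x
    have h1 : (σ * rho n * σ⁻¹) x = σ (1 + σ⁻¹ x) := rfl
    have h2 : σ (1 + σ⁻¹ x) = c + σ (σ⁻¹ x) := by
      rw [haff (1 + σ⁻¹ x), haff (σ⁻¹ x)]
      ring
    rw [h1, h2, show σ (σ⁻¹ x) = x from σ.apply_symm_apply x, rho_pow, ZMod.natCast_val, ZMod.cast_id]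
  rw [heq]
  exact Subgroup.pow_mem _ (Subgroup.mem_zpowers _) _
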